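/- arXiv:2209.07579 — 3 statements merged into one kernel-verified Lean document; each statement's English description precedes it below -/
import Mathlib

section
/- Let 𝒢 be a DAG whose skeleton is a tree. An arrow i → j of 𝒢 is essential if and only if either (1) there is a node k such that i → j ← k is an induced subgraph of 𝒢, or (2) i is a descendant in 𝒢 of a node having at least two parents. -/
open Classical

/-- A DAG on vertex type `V`: a directed graph (adjacency relation) with no directed cycles. -/
structure DAG (V : Type) where
  adj : V → V → Prop
  acyclic : ∀ v, ¬ Relation.TransGen adj v v

namespace DAG

variable {V : Type}

/-- The skeleton of a DAG: the undirected graph obtained by forgetting directions. -/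
def skeleton (D : DAG V) : SimpleGraph V where
  Adj i j := D.adj i j ∨ D.adj j i
  symm := ⟨by intro i j h; exact h.symm⟩
  loopless := ⟨by
    intro i h
    rcases h with h | h <;> exact D.acyclic i (Relation.TransGen.single h)⟩

/-- The characteristic imset of a DAG, as a vector indexed by finite vertex sets
(coordinates on sets of size `< 2` are identically zero). -/
noncomputable def imset (D : DAG V) (S : Finset V) : ℝ :=
  if 2 ≤ S.card ∧ ∃ i ∈ S, ∀ j ∈ S, j ≠ i → D.adj j i then 1 else 0

/-- `D.IsVStructure i j k` means `i → j ← k` is an induced subgraph of `D`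
(`i` and `k` non-adjacent). -/
def IsVStructure (D : DAG V) (i j k : V) : Prop :=
  i ≠ k ∧ D.adj i j ∧ D.adj k j ∧ ¬ D.adj i k ∧ ¬ D.adj k i

end DAG

/-- Two DAGs are Markov equivalent iff they have the same skeleton and the same
v-structures. -/
def MarkovEquiv {V : Type} (D E : DAG V) : Prop :=
  D.skeleton = E.skeleton ∧ ∀ i j k, D.IsVStructure i j k ↔ E.IsVStructure i j k

/-- An arrow `i → j` of `D` is essential if it occurs in every DAG Markov equivalent to `D`. -/
def DAG.Essential {V : Type} (D : DAG V) (i j : V) : Prop :=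
  D.adj i j ∧ ∀ E : DAG V, MarkovEquiv D E → E.adj i j

/-- The characteristic imset polytope of an undirected graph `G`: the convex hull of the
characteristic imsets of all DAGs with skeleton `G`. -/
noncomputable def CIM {V : Type} (G : SimpleGraph V) : Set (Finset V → ℝ) :=
  convexHull ℝ { f | ∃ D : DAG V, D.skeleton = G ∧ f = D.imset }

/-- `conv(u,v)` is an edge (one-dimensional face) of `P`: there is a linear functional whose
maximum over `P` is attained exactly on the segment from `u` to `v`. -/
def IsPolytopeEdge {E : Type*} [AddCommGroup E] [Module ℝ E] (P : Set E) (u v : E) : Prop :=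
  u ≠ v ∧ ∃ φ : E →ₗ[ℝ] ℝ, (∀ x ∈ P, φ x ≤ φ u) ∧ ∀ x ∈ P, (φ x = φ u ↔ x ∈ segment ℝ u v)

/-- `P` is a simplex of dimension `d`: the convex hull of `d+1` affinely independent points. -/
def IsSimplexOfDim {E : Type*} [AddCommGroup E] [Module ℝ E] (P : Set E) (d : ℕ) : Prop :=
  ∃ pts : Fin (d + 1) → E, AffineIndependent ℝ pts ∧ P = convexHull ℝ (Set.range pts)

/-- The standard basis vector indexed by `S`. -/
noncomputable def eVec {V : Type} (S : Finset V) : Finset V → ℝ :=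
  fun T => if T = S then 1 else 0

namespace EssAux

variable {V : Type}

lemma no2 (D : DAG V) {a b : V} (h1 : D.adj a b) (h2 : D.adj b a) : False :=
  D.acyclic a ((Relation.TransGen.single h1).tail h2)

lemma no_rtg (D : DAG V) {a b : V} (h1 : D.adj a b) (h2 : Relation.ReflTransGen D.adj b a) :
    False :=
  D.acyclic a (Relation.TransGen.head' h1 h2)

lemma no_triangle {G : SimpleGraph V} (h : G.IsAcyclic) {a b c : V}
    (hab : G.Adj a b) (hbc : G.Adj b c) (hac : G.Adj a c) : False := by
  have hp := SimpleGraph.isAcyclic_iff_path_unique.mp h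
  have h2 : (⟨SimpleGraph.Walk.cons hac SimpleGraph.Walk.nil, by simp [hac.ne]⟩ : G.Path a c)
      = ⟨SimpleGraph.Walk.cons hab (SimpleGraph.Walk.cons hbc SimpleGraph.Walk.nil), by
          simp [hab.ne, hbc.ne, hac.ne]⟩ := hp _ _
  have h3 := congrArg (fun q : G.Path a c => q.1.length) h2
  simp at h3

lemma forced (D E : DAG V) (ME : MarkovEquiv D E) {w v u : V}
    (h1 : E.adj w v) (h2 : D.adj v u) (hwu : w ≠ u) (hna : ¬ D.skeleton.Adj w u) :
    E.adj v u := by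
  have hskel : D.skeleton.Adj v u := Or.inl h2
  rw [ME.1] at hskel hna
  have hskel' : E.adj v u ∨ E.adj u v := hskel
  rcases hskel' with h | h
  · exact h
  · exfalso
    have hvs : E.IsVStructure w v u :=
      ⟨hwu, h1, h, fun hh => hna (Or.inl hh), fun hh => hna (Or.inr hh)⟩
    exact no2 D h2 ((ME.2 w v u).mpr hvs).2.2.1

/-- The set of vertices whose orientation is flipped: ancestors of `i` together with `j`. -/
def anc (D : DAG V) (i j v : V) : Prop :=
  Relation.ReflTransGen D.adj v i ∨ v = j

/-- The flipped adjacency relation. -/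
def rev (D : DAG V) (i j u v : V) : Prop :=
  (anc D i j u ∧ anc D i j v ∧ D.adj v u) ∨ (¬ (anc D i j u ∧ anc D i j v) ∧ D.adj u v)

lemma anc_closed (D : DAG V) (i j : V) (hpj : ∀ w, D.adj w j → w = i)
    {x y : V} (hxy : D.adj x y) (hy : anc D i j y) : anc D i j x := by
  rcases hy with hy | rfl
  · exact Or.inl (Relation.ReflTransGen.head hxy hy)
  · rw [hpj x hxy]; exact Or.inl Relation.ReflTransGen.refl

lemma rev_anc (D : DAG V) (i j : V) (hpj : ∀ w, D.adj w j → w = i)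
    {u v : V} (h : rev D i j u v) (hv : anc D i j v) : anc D i j u := by
  rcases h with ⟨h, _⟩ | ⟨_, h⟩
  · exact h
  · exact anc_closed D i j hpj h hv

lemma rev_adj (D : DAG V) (i j : V) (hpj : ∀ w, D.adj w j → w = i)
    {u v : V} (h : rev D i j u v) (hv : anc D i j v) : D.adj v u := by
  rcases h with ⟨_, _, h⟩ | ⟨hn, h⟩
  · exact h
  · exact absurd ⟨anc_closed D i j hpj h hv, hv⟩ hn

lemma rev_adj' (D : DAG V) (i j : V)
    {u v : V} (h : rev D i j u v) (hv : ¬ anc D i j v) : D.adj u v := by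
  rcases h with ⟨_, h, _⟩ | ⟨_, h⟩
  · exact absurd h hv
  · exact h

lemma revLA (D : DAG V) (i j : V) (hpj : ∀ w, D.adj w j → w = i)
    {x y : V} (h : Relation.TransGen (rev D i j) x y) (hy : anc D i j y) :
    anc D i j x ∧ Relation.TransGen D.adj y x := by
  induction h with
  | single h =>
    exact ⟨rev_anc D i j hpj h hy, Relation.TransGen.single (rev_adj D i j hpj h hy)⟩
  | tail h1 h2 ih =>
    have hb := rev_anc D i j hpj h2 hy
    obtain ⟨hx, ht⟩ := ih hb
    exact ⟨hx, Relation.TransGen.head (rev_adj D i j hpj h2 hy) ht⟩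

lemma revLB (D : DAG V) (i j : V) (hpj : ∀ w, D.adj w j → w = i)
    {x y : V} (h : Relation.TransGen (rev D i j) x y) (hy : ¬ anc D i j y) :
    anc D i j x ∨ Relation.TransGen D.adj x y := by
  induction h with
  | single h =>
    exact Or.inr (Relation.TransGen.single (rev_adj' D i j h hy))
  | tail h1 h2 ih =>
    rename_i b c
    by_cases hb : anc D i j b
    · exact Or.inl (revLA D i j hpj h1 hb).1
    · rcases ih hb with hx | ht
      · exact Or.inl hx
      · exact Or.inr (ht.tail (rev_adj' D i j h2 hy))

lemma rev_acyclic (D : DAG V) (i j : V) (hpj : ∀ w, D.adj w j → w = i) :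
    ∀ v, ¬ Relation.TransGen (rev D i j) v v := by
  intro v hv
  by_cases hCv : anc D i j v
  · exact D.acyclic v (revLA D i j hpj hv hCv).2
  · rcases revLB D i j hpj hv hCv with h | h
    · exact hCv h
    · exact D.acyclic v h

lemma rev_skel (D : DAG V) (i j : V) (u v : V) :
    (rev D i j u v ∨ rev D i j v u) ↔ (D.adj u v ∨ D.adj v u) := by
  unfold rev
  by_cases h : anc D i j u ∧ anc D i j v
  · have h' : anc D i j v ∧ anc D i j u := ⟨h.2, h.1⟩
    tauto
  · have h' : ¬ (anc D i j v ∧ anc D i j u) := fun hh => h ⟨hh.2, hh.1⟩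
    tauto

lemma D_parents_unique (D : DAG V) (i j : V) (hpj : ∀ w, D.adj w j → w = i)
    (huniq : ∀ v, Relation.ReflTransGen D.adj v i → ∀ q r, D.adj q v → D.adj r v → q = r)
    {b : V} (hb : anc D i j b) {q r : V}
    (hq : D.adj q b) (hr : D.adj r b) : q = r := by
  rcases hb with hb | rfl
  · exact huniq b hb q r hq hr
  · rw [hpj q hq, hpj r hr]

lemma E_parents_key (D : DAG V) (i j : V) (hpj : ∀ w, D.adj w j → w = i)
    (huniq : ∀ v, Relation.ReflTransGen D.adj v i → ∀ q r, D.adj q v → D.adj r v → q = r)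
    (comp : ∀ u, Relation.ReflTransGen D.adj u i → ∀ v, Relation.ReflTransGen D.adj v i →
      Relation.ReflTransGen D.adj u v ∨ Relation.ReflTransGen D.adj v u)
    {b q r : V} (hq : anc D i j q) (hr : anc D i j r)
    (hbq : D.adj b q) (hbr : D.adj b r) : q = r := by
  have hkey : ∀ x y : V, Relation.ReflTransGen D.adj x i →
      Relation.ReflTransGen D.adj y i → D.adj b x → D.adj b y →
      Relation.ReflTransGen D.adj x y → x = y := by
    intro x y hx hy hbx hby hxy
    rcases Relation.ReflTransGen.cases_tail hxy with h | ⟨z, hz1, hz2⟩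
    · exact h.symm
    · have hz : z = b := huniq y hy z b hz2 hby
      rw [hz] at hz1
      exact absurd hz1 (fun hh => no_rtg D hbx hh)
  rcases hq with hq | rfl
  · rcases hr with hr | rfl
    · rcases comp q hq r hr with h | h
      · exact hkey q r hq hr hbq hbr h
      · exact (hkey r q hr hq hbr hbq h).symm
    · have hb : b = i := hpj b hbr
      rw [hb] at hbq
      exact absurd hq (fun hh => (no_rtg D hbq hh))
  · rcases hr with hr | rfl
    · have hb : b = i := hpj b hbq
      rw [hb] at hbr
      exact absurd hr (fun hh => (no_rtg D hbr hh))
    · rfl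

lemma E_parents_unique (D : DAG V) (i j : V) (hpj : ∀ w, D.adj w j → w = i)
    (huniq : ∀ v, Relation.ReflTransGen D.adj v i → ∀ q r, D.adj q v → D.adj r v → q = r)
    (comp : ∀ u, Relation.ReflTransGen D.adj u i → ∀ v, Relation.ReflTransGen D.adj v i →
      Relation.ReflTransGen D.adj u v ∨ Relation.ReflTransGen D.adj v u)
    {b : V} (hb : anc D i j b) {q r : V}
    (hq : rev D i j q b) (hr : rev D i j r b) : q = r :=
  E_parents_key D i j hpj huniq comp
    (rev_anc D i j hpj hq hb) (rev_anc D i j hpj hr hb)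
    (rev_adj D i j hpj hq hb) (rev_adj D i j hpj hr hb)

lemma rev_out (D : DAG V) (i j : V) (hpj : ∀ w, D.adj w j → w = i)
    {a b : V} (hb : ¬ anc D i j b) : rev D i j a b ↔ D.adj a b := by
  constructor
  · intro h; exact rev_adj' D i j h hb
  · intro h; exact Or.inr ⟨fun hh => hb hh.2, h⟩

end EssAux

/-- **Characterization of essential arrows in a tree.**  Let `D` be a DAG whose skeleton is
a tree.  An arrow `i → j` of `D` is essential iff either (1) there is a node `k` such that
`i → j ← k` is an induced subgraph of `D`, or (2) `i` is a descendant of a node having at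
least two parents. -/
theorem essential_iff_in_tree {p : ℕ} (D : DAG (Fin p)) (htree : D.skeleton.IsTree)
    (i j : Fin p) (hij : D.adj i j) :
    D.Essential i j ↔
      ((∃ k, D.IsVStructure i j k) ∨
        (∃ a, Relation.ReflTransGen D.adj a i ∧ ∃ q r, q ≠ r ∧ D.adj q a ∧ D.adj r a)) := by
  have hac := htree.IsAcyclic
  constructor
  · -- essential → conditions, by contraposition
    intro hess
    by_contra hcond
    push_neg at hcond
    obtain ⟨hc1, hc2⟩ := hcond
    have hpj : ∀ w, D.adj w j → w = i := by
      intro w hw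
      by_contra hwi
      have s1 : D.skeleton.Adj i j := Or.inl hij
      have s2 : D.skeleton.Adj j w := Or.inr hw
      refine hc1 w ⟨fun h => hwi h.symm, hij, hw, ?_, ?_⟩
      · intro h
        have s3 : D.skeleton.Adj i w := Or.inl h
        exact EssAux.no_triangle hac s1 s2 s3
      · intro h
        have s3 : D.skeleton.Adj i w := Or.inr h
        exact EssAux.no_triangle hac s1 s2 s3
    have huniq : ∀ v, Relation.ReflTransGen D.adj v i →
        ∀ q r, D.adj q v → D.adj r v → q = r := by
      intro v hv q r hq hr
      by_contra h
      exact hc2 v hv q r h hq hr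
    have comp : ∀ u, Relation.ReflTransGen D.adj u i → ∀ v, Relation.ReflTransGen D.adj v i →
        Relation.ReflTransGen D.adj u v ∨ Relation.ReflTransGen D.adj v u := by
      intro u hu
      induction hu using Relation.ReflTransGen.head_induction_on with
      | refl => intro v hv; exact Or.inr hv
      | head h' h ih =>
        rename_i x y
        intro v hv
        rcases ih v hv with h1 | h1
        · exact Or.inl (Relation.ReflTransGen.head h' h1)
        · rcases Relation.ReflTransGen.cases_tail h1 with heq | ⟨z, hz1, hz2⟩
          · rw [heq] at h'
            exact Or.inl (Relation.ReflTransGen.single h')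
          · have hz : z = x := huniq y h z x hz2 h'
            rw [hz] at hz1
            exact Or.inr hz1
    have hME : MarkovEquiv D
        (⟨EssAux.rev D i j, EssAux.rev_acyclic D i j hpj⟩ : DAG (Fin p)) := by
      constructor
      · ext u v
        show (D.adj u v ∨ D.adj v u) ↔ (EssAux.rev D i j u v ∨ EssAux.rev D i j v u)
        exact (EssAux.rev_skel D i j u v).symm
      · intro a b c
        show (a ≠ c ∧ D.adj a b ∧ D.adj c b ∧ ¬ D.adj a c ∧ ¬ D.adj c a) ↔
          (a ≠ c ∧ EssAux.rev D i j a b ∧ EssAux.rev D i j c b ∧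
            ¬ EssAux.rev D i j a c ∧ ¬ EssAux.rev D i j c a)
        by_cases hb : EssAux.anc D i j b
        · constructor
          · rintro ⟨hac', h1, h2, _, _⟩
            exact absurd (EssAux.D_parents_unique D i j hpj huniq hb h1 h2) hac'
          · rintro ⟨hac', h1, h2, _, _⟩
            exact absurd (EssAux.E_parents_unique D i j hpj huniq comp hb h1 h2) hac'
        · have e1 := EssAux.rev_out D i j hpj (a := a) hb
          have e2 := EssAux.rev_out D i j hpj (a := c) hb
          have e3 := EssAux.rev_skel D i j a c
          tauto
    have hEij : EssAux.rev D i j i j := hess.2 _ hME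
    rcases hEij with ⟨_, _, hji⟩ | ⟨hn, _⟩
    · exact EssAux.no2 D hij hji
    · exact hn ⟨Or.inl Relation.ReflTransGen.refl, Or.inr rfl⟩
  · -- conditions → essential
    intro hcond
    refine ⟨hij, ?_⟩
    intro E ME
    rcases hcond with ⟨k, hk⟩ | ⟨a, hai, q, r, hqr, hq, hr⟩
    · exact ((ME.2 i j k).mp hk).2.1
    · have hqr' : ¬ D.skeleton.Adj q r := by
        intro h
        have s1 : D.skeleton.Adj q a := Or.inl hq
        have s2 : D.skeleton.Adj a r := Or.inr hr
        exact EssAux.no_triangle hac s1 s2 h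
      have hvs : D.IsVStructure q a r :=
        ⟨hqr, hq, hr, fun h => hqr' (Or.inl h), fun h => hqr' (Or.inr h)⟩
      have hE := (ME.2 q a r).mp hvs
      have claim : ∀ v, Relation.ReflTransGen D.adj a v → ∃ w, D.adj w v ∧ E.adj w v := by
        intro v hv
        induction hv with
        | refl => exact ⟨q, hq, hE.2.1⟩
        | tail h1 h2 ih =>
          rename_i b v'
          obtain ⟨w, hw1, hw2⟩ := ih
          have hwv : w ≠ v' := by
            rintro rfl
            exact EssAux.no2 D h2 hw1
          have hna : ¬ D.skeleton.Adj w v' := by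
            intro h
            exact EssAux.no_triangle hac (Or.inl hw1) (Or.inl h2) h
          exact ⟨b, h2, EssAux.forced D E ME hw2 h2 hwv hna⟩
      obtain ⟨w, hw1, hw2⟩ := claim i hai
      have hwj : w ≠ j := by
        rintro rfl
        exact EssAux.no2 D hij hw1
      have hna : ¬ D.skeleton.Adj w j := by
        intro h
        exact EssAux.no_triangle hac (Or.inl hw1) (Or.inl hij) h
      exact EssAux.forced D E ME hw2 hij hwj hna
end

section
/- Let 𝒢 be a DAG whose skeleton is a tree. If i → j is an essential arrow of 𝒢, then every edge of 𝒢 having j as an endpoint is essential in 𝒢. -/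
open Classical

lemma DAG.no_cycle2 {V : Type} (D : DAG V) {a b : V} (h1 : D.adj a b) (h2 : D.adj b a) :
    False :=
  D.acyclic a (Relation.TransGen.head h1 (Relation.TransGen.single h2))

lemma tree_no_triangle {p : ℕ} (D : DAG (Fin p)) (htree : D.skeleton.IsTree)
    {a b c : Fin p} (hab : D.skeleton.Adj a b) (hbc : D.skeleton.Adj b c)
    (hac : D.skeleton.Adj a c) : False := by
  have hbne : b ≠ c := hbc.ne
  have hane : a ≠ b := hab.ne
  have hacne : a ≠ c := hac.ne
  have hP1 : (SimpleGraph.Walk.cons hac .nil).IsPath := by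
    simp [SimpleGraph.Walk.isPath_def, hacne]
  have hP2 : (SimpleGraph.Walk.cons hab (SimpleGraph.Walk.cons hbc .nil)).IsPath := by
    simp [SimpleGraph.Walk.isPath_def, hane, hbne, hacne]
  have heq := htree.IsAcyclic.path_unique ⟨_, hP1⟩ ⟨_, hP2⟩
  have hlen := congrArg (fun P : D.skeleton.Path a c => P.1.length) heq
  simp at hlen

/-- **Essential arrows propagate.**  Let `D` be a DAG whose skeleton is a tree.  If `i → j`
is an essential arrow of `D`, then every edge of `D` having `j` as an endpoint is
essential in `D`. -/
theorem essential_arrows_at_a_node {p : ℕ} (D : DAG (Fin p)) (htree : D.skeleton.IsTree)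
    (i j : Fin p) (h : D.Essential i j) :
    ∀ k, (D.adj j k → D.Essential j k) ∧ (D.adj k j → D.Essential k j) := by
  intro k
  obtain ⟨hij, hess⟩ := h
  constructor
  · intro hjk
    have hik : i ≠ k := by rintro rfl; exact DAG.no_cycle2 D hij hjk
    have hnadj : ¬ D.skeleton.Adj i k := fun hh =>
      tree_no_triangle D htree (Or.inl hij) (Or.inl hjk) hh
    refine ⟨hjk, fun E hE => ?_⟩
    obtain ⟨hskel, hvs⟩ := hE
    have hEij : E.adj i j := hess E ⟨hskel, hvs⟩
    have hEjk : E.skeleton.Adj j k := hskel ▸ (Or.inl hjk : D.skeleton.Adj j k)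
    rcases hEjk with h1 | h1
    · exact h1
    · exfalso
      have hnadjE : ¬ E.skeleton.Adj i k := hskel ▸ hnadj
      have hv : E.IsVStructure i j k :=
        ⟨hik, hEij, h1, fun hh => hnadjE (Or.inl hh), fun hh => hnadjE (Or.inr hh)⟩
      have hD := (hvs i j k).mpr hv
      exact DAG.no_cycle2 D hjk hD.2.2.1
  · intro hkj
    by_cases hk : k = i
    · subst hk; exact ⟨hkj, fun E hE => hess E hE⟩
    · have hnadj : ¬ D.skeleton.Adj i k := fun hh =>
        tree_no_triangle D htree (Or.inl hij) (Or.inr hkj) hh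
      refine ⟨hkj, fun E hE => ?_⟩
      have hv : D.IsVStructure i j k :=
        ⟨fun hh => hk hh.symm, hij, hkj,
          fun hh => hnadj (Or.inl hh), fun hh => hnadj (Or.inr hh)⟩
      exact ((hE.2 i j k).mp hv).2.2.1
end

section
/- Let G = G₁ ∪ G₂ be the disjoint union of undirected graphs G₁ = (V₁, E₁) and G₂ = (V₂, E₂). Then the polytope CIM_G is affinely equivalent to the product polytope CIM_{G₁} × CIM_{G₂}. -/
open Classical

namespace CIMAux

open Sum

variable {V₁ V₂ : Type}

/-- Embedding of `V₁` into `V₁ ⊕ V₂`. -/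
def inlEmb : V₁ ↪ V₁ ⊕ V₂ := ⟨Sum.inl, Sum.inl_injective⟩

/-- Embedding of `V₂` into `V₁ ⊕ V₂`. -/
def inrEmb : V₂ ↪ V₁ ⊕ V₂ := ⟨Sum.inr, Sum.inr_injective⟩

lemma dagExt {V : Type} {D E : DAG V} (h : D.adj = E.adj) : D = E := by
  cases D; cases E; cases h; rfl

/-- Restriction of a DAG on `V₁ ⊕ V₂` to `V₁`. -/
def DAG.left (D : DAG (V₁ ⊕ V₂)) : DAG V₁ where
  adj i j := D.adj (inl i) (inl j)
  acyclic v h := D.acyclic (inl v) (h.lift inl (fun _ _ hab => hab))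

/-- Restriction of a DAG on `V₁ ⊕ V₂` to `V₂`. -/
def DAG.right (D : DAG (V₁ ⊕ V₂)) : DAG V₂ where
  adj i j := D.adj (inr i) (inr j)
  acyclic v h := D.acyclic (inr v) (h.lift inr (fun _ _ hab => hab))

lemma transGen_liftRel {r : V₁ → V₁ → Prop} {s : V₂ → V₂ → Prop} {x y : V₁ ⊕ V₂}
    (h : Relation.TransGen (Sum.LiftRel r s) x y) :
    Sum.LiftRel (Relation.TransGen r) (Relation.TransGen s) x y := by
  induction h with
  | single h =>
    exact Sum.LiftRel.mono (fun _ _ => Relation.TransGen.single) (fun _ _ => Relation.TransGen.single) h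
  | tail _ h ih =>
    cases ih with
    | inl h1 => cases h with | inl h2 => exact Sum.LiftRel.inl (h1.tail h2)
    | inr h1 => cases h with | inr h2 => exact Sum.LiftRel.inr (h1.tail h2)

/-- Disjoint sum of two DAGs. -/
def DAG.dsum (D₁ : DAG V₁) (D₂ : DAG V₂) : DAG (V₁ ⊕ V₂) where
  adj := Sum.LiftRel D₁.adj D₂.adj
  acyclic v h := by
    cases v with
    | inl a => cases transGen_liftRel h with | inl h' => exact D₁.acyclic a h'
    | inr b => cases transGen_liftRel h with | inr h' => exact D₂.acyclic b h'

lemma dsum_left (D₁ : DAG V₁) (D₂ : DAG V₂) : DAG.left (DAG.dsum D₁ D₂) = D₁ := by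
  refine dagExt ?_
  funext i j
  exact propext Sum.liftRel_inl_inl

lemma dsum_right (D₁ : DAG V₁) (D₂ : DAG V₂) : DAG.right (DAG.dsum D₁ D₂) = D₂ := by
  refine dagExt ?_
  funext i j
  exact propext Sum.liftRel_inr_inr

lemma skeleton_dsum (D₁ : DAG V₁) (D₂ : DAG V₂) :
    (DAG.dsum D₁ D₂).skeleton = D₁.skeleton ⊕g D₂.skeleton := by
  ext x y
  cases x <;> cases y <;>
    simp [DAG.skeleton, DAG.dsum, Sum.liftRel_iff, or_comm]

lemma skeleton_left {G₁ : SimpleGraph V₁} {G₂ : SimpleGraph V₂} {D : DAG (V₁ ⊕ V₂)}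
    (h : D.skeleton = G₁ ⊕g G₂) : (DAG.left D).skeleton = G₁ := by
  ext i j
  have := congrArg (fun H : SimpleGraph (V₁ ⊕ V₂) => H.Adj (inl i) (inl j)) h
  simpa [DAG.skeleton, DAG.left] using this

lemma skeleton_right {G₁ : SimpleGraph V₁} {G₂ : SimpleGraph V₂} {D : DAG (V₁ ⊕ V₂)}
    (h : D.skeleton = G₁ ⊕g G₂) : (DAG.right D).skeleton = G₂ := by
  ext i j
  have := congrArg (fun H : SimpleGraph (V₁ ⊕ V₂) => H.Adj (inr i) (inr j)) h
  simpa [DAG.skeleton, DAG.right] using this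

lemma imset_map_inl (D : DAG (V₁ ⊕ V₂)) (S : Finset V₁) :
    D.imset (S.map inlEmb) = (DAG.left D).imset S := by
  have key : (2 ≤ (S.map (inlEmb (V₂ := V₂)) ).card ∧ ∃ i ∈ S.map (inlEmb (V₂ := V₂)), ∀ j ∈ S.map (inlEmb (V₂ := V₂)), j ≠ i → D.adj j i)
      ↔ (2 ≤ S.card ∧ ∃ i ∈ S, ∀ j ∈ S, j ≠ i → (DAG.left D).adj j i) := by
    rw [Finset.card_map]
    refine and_congr_right fun _ => ?_
    constructor
    · rintro ⟨i, hi, hall⟩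
      rw [Finset.mem_map] at hi
      obtain ⟨a, ha, rfl⟩ := hi
      refine ⟨a, ha, fun j hj hja => ?_⟩
      exact hall (inl j) (Finset.mem_map_of_mem _ hj) (by simpa [inlEmb] using hja)
    · rintro ⟨a, ha, hall⟩
      refine ⟨inlEmb a, Finset.mem_map_of_mem _ ha, fun j hj hja => ?_⟩
      rw [Finset.mem_map] at hj
      obtain ⟨b, hb, rfl⟩ := hj
      exact hall b hb (by simpa [inlEmb] using hja)
  rw [DAG.imset, DAG.imset]
  by_cases h : 2 ≤ S.card ∧ ∃ i ∈ S, ∀ j ∈ S, j ≠ i → (DAG.left D).adj j i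
  · rw [if_pos (key.2 h), if_pos h]
  · rw [if_neg (fun hc => h (key.1 hc)), if_neg h]

lemma imset_map_inr (D : DAG (V₁ ⊕ V₂)) (S : Finset V₂) :
    D.imset (S.map inrEmb) = (DAG.right D).imset S := by
  have key : (2 ≤ (S.map (inrEmb (V₁ := V₁)) ).card ∧ ∃ i ∈ S.map (inrEmb (V₁ := V₁)), ∀ j ∈ S.map (inrEmb (V₁ := V₁)), j ≠ i → D.adj j i)
      ↔ (2 ≤ S.card ∧ ∃ i ∈ S, ∀ j ∈ S, j ≠ i → (DAG.right D).adj j i) := by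
    rw [Finset.card_map]
    refine and_congr_right fun _ => ?_
    constructor
    · rintro ⟨i, hi, hall⟩
      rw [Finset.mem_map] at hi
      obtain ⟨a, ha, rfl⟩ := hi
      refine ⟨a, ha, fun j hj hja => ?_⟩
      exact hall (inr j) (Finset.mem_map_of_mem _ hj) (by simpa [inrEmb] using hja)
    · rintro ⟨a, ha, hall⟩
      refine ⟨inrEmb a, Finset.mem_map_of_mem _ ha, fun j hj hja => ?_⟩
      rw [Finset.mem_map] at hj
      obtain ⟨b, hb, rfl⟩ := hj
      exact hall b hb (by simpa [inrEmb] using hja)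
  rw [DAG.imset, DAG.imset]
  by_cases h : 2 ≤ S.card ∧ ∃ i ∈ S, ∀ j ∈ S, j ≠ i → (DAG.right D).adj j i
  · rw [if_pos (key.2 h), if_pos h]
  · rw [if_neg (fun hc => h (key.1 hc)), if_neg h]

lemma imset_mixed {G₁ : SimpleGraph V₁} {G₂ : SimpleGraph V₂} (D : DAG (V₁ ⊕ V₂))
    (hsk : D.skeleton = G₁ ⊕g G₂) (S : Finset (V₁ ⊕ V₂))
    (h1 : S.toLeft.Nonempty) (h2 : S.toRight.Nonempty) : D.imset S = 0 := by
  have hcross : ∀ x y : V₁ ⊕ V₂, D.adj x y → (G₁ ⊕g G₂).Adj x y := by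
    intro x y h
    rw [← hsk]
    exact Or.inl h
  rw [DAG.imset, if_neg]
  rintro ⟨-, i, hi, hall⟩
  obtain ⟨a, ha⟩ := h1
  obtain ⟨b, hb⟩ := h2
  rw [Finset.mem_toLeft] at ha
  rw [Finset.mem_toRight] at hb
  cases i with
  | inl i => simpa using hcross _ _ (hall (inr b) hb (by simp))
  | inr i => simpa using hcross _ _ (hall (inl a) ha (by simp))

/-- The linear projection forgetting mixed coordinates. -/
noncomputable def cimMap : (Finset (V₁ ⊕ V₂) → ℝ) →ₗ[ℝ]
    (Finset V₁ → ℝ) × (Finset V₂ → ℝ) :=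
  (LinearMap.funLeft ℝ ℝ (fun S : Finset V₁ => S.map inlEmb)).prod
    (LinearMap.funLeft ℝ ℝ (fun S : Finset V₂ => S.map inrEmb))

/-- Vectors vanishing on mixed index sets. -/
noncomputable def mixedZero : Submodule ℝ (Finset (V₁ ⊕ V₂) → ℝ) where
  carrier := {c | ∀ S : Finset (V₁ ⊕ V₂), S.toLeft.Nonempty → S.toRight.Nonempty → c S = 0}
  add_mem' := by
    intro a b ha hb S h1 h2
    simp [ha S h1 h2, hb S h1 h2]
  zero_mem' := by intro S _ _; rfl
  smul_mem' := by
    intro r a ha S h1 h2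
    simp [ha S h1 h2]

lemma pure_left (S : Finset (V₁ ⊕ V₂)) (h : S.toRight = ∅) :
    S = S.toLeft.map (inlEmb (V₂ := V₂)) := by
  ext x
  cases x with
  | inl a => simp [inlEmb]
  | inr b =>
    simp only [Finset.mem_map]
    constructor
    · intro hx
      have : b ∈ S.toRight := Finset.mem_toRight.2 hx
      simp [h] at this
    · rintro ⟨c, -, hc⟩
      simp [inlEmb] at hc
  
lemma pure_right (S : Finset (V₁ ⊕ V₂)) (h : S.toLeft = ∅) :
    S = S.toRight.map (inrEmb (V₁ := V₁)) := by
  ext x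
  cases x with
  | inr a => simp [inrEmb]
  | inl b =>
    simp only [Finset.mem_map]
    constructor
    · intro hx
      have : b ∈ S.toLeft := Finset.mem_toLeft.2 hx
      simp [h] at this
    · rintro ⟨c, -, hc⟩
      simp [inrEmb] at hc

end CIMAux

/-- **CIM of a disjoint union.**  If `G` is the disjoint union of `G₁` and `G₂`, then
`CIM_G` is affinely equivalent to the product polytope `CIM_{G₁} × CIM_{G₂}`: there is an
affine map, injective on the affine span of `CIM_G`, carrying `CIM_G` onto
`CIM_{G₁} × CIM_{G₂}`. -/
theorem cim_disjoint_union_affinely_equiv {V₁ V₂ : Type}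
    (G₁ : SimpleGraph V₁) (G₂ : SimpleGraph V₂) :
    ∃ f : (Finset (V₁ ⊕ V₂) → ℝ) →ᵃ[ℝ] ((Finset V₁ → ℝ) × (Finset V₂ → ℝ)),
      Set.InjOn f (affineSpan ℝ (CIM (G₁ ⊕g G₂)) : Set (Finset (V₁ ⊕ V₂) → ℝ)) ∧
      f '' CIM (G₁ ⊕g G₂) = (CIM G₁) ×ˢ (CIM G₂) := by
  classical
  open CIMAux in
  refine ⟨cimMap.toAffineMap, ?_, ?_⟩
  · -- injectivity on the affine span
    have hsub : (affineSpan ℝ (CIM (G₁ ⊕g G₂)) : Set (Finset (V₁ ⊕ V₂) → ℝ)) ⊆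
        (mixedZero : Submodule ℝ (Finset (V₁ ⊕ V₂) → ℝ)) := by
      have hZ : CIM (G₁ ⊕g G₂) ⊆
          ((mixedZero : Submodule ℝ (Finset (V₁ ⊕ V₂) → ℝ)).toAffineSubspace :
            Set (Finset (V₁ ⊕ V₂) → ℝ)) := by
        refine (convexHull_min ?_ ?_)
        · rintro c ⟨D, hsk, rfl⟩ S h1 h2
          exact imset_mixed D hsk S h1 h2
        · exact mixedZero.convex
      intro x hx
      exact affineSpan_le.2 hZ hx
    intro c hc c' hc' hcc
    have hc0 := hsub hc
    have hc0' := hsub hc'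
    have h1 : ∀ S : Finset V₁, c (S.map inlEmb) = c' (S.map inlEmb) := by
      intro S
      exact congrFun (congrArg Prod.fst hcc) S
    have h2 : ∀ S : Finset V₂, c (S.map inrEmb) = c' (S.map inrEmb) := by
      intro S
      exact congrFun (congrArg Prod.snd hcc) S
    funext S
    rcases Finset.eq_empty_or_nonempty S.toRight with hR | hR
    · rw [pure_left S hR]; exact h1 _
    · rcases Finset.eq_empty_or_nonempty S.toLeft with hL | hL
      · rw [pure_right S hL]; exact h2 _
      · rw [hc0 S hL hR, hc0' S hL hR]
  · -- image equality
    have himg : cimMap '' { f | ∃ D : DAG (V₁ ⊕ V₂), D.skeleton = G₁ ⊕g G₂ ∧ f = D.imset } =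
        { f | ∃ D : DAG V₁, D.skeleton = G₁ ∧ f = D.imset } ×ˢ
        { f | ∃ D : DAG V₂, D.skeleton = G₂ ∧ f = D.imset } := by
      ext p
      constructor
      · rintro ⟨c, ⟨D, hsk, rfl⟩, rfl⟩
        constructor
        · exact ⟨DAG.left D, skeleton_left hsk, funext fun S => imset_map_inl D S⟩
        · exact ⟨DAG.right D, skeleton_right hsk, funext fun S => imset_map_inr D S⟩
      · rintro ⟨⟨D₁, hsk₁, h₁⟩, ⟨D₂, hsk₂, h₂⟩⟩
        refine ⟨(DAG.dsum D₁ D₂).imset, ⟨DAG.dsum D₁ D₂, ?_, rfl⟩, ?_⟩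
        · rw [skeleton_dsum, hsk₁, hsk₂]
        · have e1 : (cimMap (DAG.dsum D₁ D₂).imset).1 = p.1 := by
            funext S
            show (DAG.dsum D₁ D₂).imset (S.map inlEmb) = p.1 S
            rw [imset_map_inl, dsum_left, h₁]
          have e2 : (cimMap (DAG.dsum D₁ D₂).imset).2 = p.2 := by
            funext S
            show (DAG.dsum D₁ D₂).imset (S.map inrEmb) = p.2 S
            rw [imset_map_inr, dsum_right, h₂]
          exact Prod.ext e1 e2
    show cimMap '' CIM (G₁ ⊕g G₂) = _
    rw [CIM, cimMap.image_convexHull, himg, convexHull_prod]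
    rfl
end
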